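/- Let (x₁, y₁), …, (x_n, y_n) be integer points in the plane. Then there exists a real number K₀ > 0 such that for every real K ≥ K₀ and all pairwise distinct indices i, j, k ∈ {1, …, n}, the three perturbed points (x_i + i/K, y_i + i²/K), (x_j + j/K, y_j + j²/K), (x_k + k/K, y_k + k²/K) are not collinear. -/

import Mathlib

/-- A point of `ℝ²` from two coordinates. -/
noncomputable def mk2 (x y : ℝ) : EuclideanSpace ℝ (Fin 2) :=
  (WithLp.equiv 2 (Fin 2 → ℝ)).symm ![x, y]

/-- The perturbed point `(x_i + i/K, y_i + i²/K)` associated with the `i`-th integer point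
`(x_i, y_i)` (indices run over `1, …, n`, realized as `(i : Fin n) + 1`). -/
noncomputable def pert (n : ℕ) (x y : Fin n → ℤ) (i : Fin n) (K : ℝ) :
    EuclideanSpace ℝ (Fin 2) :=
  mk2 ((x i : ℝ) + ((i : ℕ) + 1 : ℝ) / K) ((y i : ℝ) + (((i : ℕ) + 1 : ℝ)) ^ 2 / K)

lemma cross_ne_not_collinear (P Q R : EuclideanSpace ℝ (Fin 2))
    (h : (Q 0 - P 0) * (R 1 - P 1) - (Q 1 - P 1) * (R 0 - P 0) ≠ 0) :
    ¬ Collinear ℝ ({P, Q, R} : Set (EuclideanSpace ℝ (Fin 2))) := by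
  intro hc
  rw [collinear_iff_of_mem (show P ∈ ({P, Q, R} : Set _) by simp)] at hc
  obtain ⟨v, hv⟩ := hc
  obtain ⟨rQ, hQ⟩ := hv Q (by simp)
  obtain ⟨rR, hR⟩ := hv R (by simp)
  apply h
  have hQ0 : Q 0 = rQ * v 0 + P 0 := by rw [hQ]; rfl
  have hQ1 : Q 1 = rQ * v 1 + P 1 := by rw [hQ]; rfl
  have hR0 : R 0 = rR * v 0 + P 0 := by rw [hR]; rfl
  have hR1 : R 1 = rR * v 1 + P 1 := by rw [hR]; rfl
  rw [hQ0, hQ1, hR0, hR1]; ring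

lemma key_arith (c0 c1 c2 : ℤ) (h2 : c2 ≠ 0) (K : ℝ)
    (hK : ((c1.natAbs + c2.natAbs : ℕ) : ℝ) + 1 ≤ K) :
    (c0 : ℝ) + c1 / K + c2 / K ^ 2 ≠ 0 := by
  have hcast : ((c1.natAbs + c2.natAbs : ℕ) : ℝ) = |(c1 : ℝ)| + |(c2 : ℝ)| := by
    push_cast [Nat.cast_natAbs]
    ring
  rw [hcast] at hK
  have hK1 : (1 : ℝ) ≤ K := by
    have := abs_nonneg (c1 : ℝ); have := abs_nonneg (c2 : ℝ); linarith
  have hK0 : (0 : ℝ) < K := by linarith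
  intro h
  have hmul : (c0 : ℝ) * K ^ 2 + c1 * K + c2 = 0 := by
    field_simp at h
    have hz : K * ((c0 : ℝ) * K ^ 2 + c1 * K + c2) = 0 := by linear_combination K * h
    rcases mul_eq_zero.1 hz with h' | h'
    · exact absurd h' (ne_of_gt hK0)
    · exact h'
  rcases eq_or_ne c0 0 with h0 | h0
  · rcases eq_or_ne c1 0 with h1 | h1
    · have : (c2 : ℝ) = 0 := by rw [h0, h1] at hmul; push_cast at hmul; linarith
      exact h2 (by exact_mod_cast this)
    · have he : (c1 : ℝ) * K = -c2 := by rw [h0] at hmul; push_cast at hmul; linarith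
      have h1' : (1 : ℝ) ≤ |(c1 : ℝ)| := by
        have := Int.one_le_abs h1
        calc (1:ℝ) ≤ ((|c1| : ℤ) : ℝ) := by exact_mod_cast this
          _ = |(c1 : ℝ)| := by push_cast; ring
      have : |(c1 : ℝ) * K| = |(c2 : ℝ)| := by rw [he, abs_neg]
      rw [abs_mul, abs_of_pos hK0] at this
      nlinarith [abs_nonneg (c1 : ℝ), abs_nonneg (c2 : ℝ)]
  · have h0' : (1 : ℝ) ≤ |(c0 : ℝ)| := by
      have := Int.one_le_abs h0
      calc (1:ℝ) ≤ ((|c0| : ℤ) : ℝ) := by exact_mod_cast this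
        _ = |(c0 : ℝ)| := by push_cast; ring
    have he : (c0 : ℝ) * K ^ 2 = -(c1 * K + c2) := by linarith
    have h1 : |(c0 : ℝ) * K ^ 2| = |(c1 : ℝ) * K + c2| := by rw [he, abs_neg]
    have h2' : |(c0 : ℝ) * K ^ 2| ≥ K ^ 2 := by
      rw [abs_mul, abs_of_pos (by positivity : (0:ℝ) < K ^ 2)]
      nlinarith
    have h3 : |(c1 : ℝ) * K + c2| ≤ |(c1:ℝ)| * K + |(c2:ℝ)| := by
      calc |(c1 : ℝ) * K + c2| ≤ |(c1:ℝ) * K| + |(c2:ℝ)| := abs_add_le _ _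
        _ = |(c1:ℝ)| * K + |(c2:ℝ)| := by rw [abs_mul, abs_of_pos hK0]
    nlinarith [abs_nonneg (c2 : ℝ)]

/-- Auxiliary: the index label `i + 1` as an integer. -/
def bI (n : ℕ) (i : Fin n) : ℤ := (i : ℕ) + 1

/-- Degree-1 coefficient of the collinearity polynomial. -/
def C1 (n : ℕ) (x y : Fin n → ℤ) (i j k : Fin n) : ℤ :=
  (x j - x i) * ((bI n k) ^ 2 - (bI n i) ^ 2) + (bI n j - bI n i) * (y k - y i)
    - (y j - y i) * (bI n k - bI n i) - ((bI n j) ^ 2 - (bI n i) ^ 2) * (x k - x i)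

/-- Degree-2 coefficient of the collinearity polynomial. -/
def C2 (n : ℕ) (i j k : Fin n) : ℤ :=
  (bI n j - bI n i) * ((bI n k) ^ 2 - (bI n i) ^ 2)
    - ((bI n j) ^ 2 - (bI n i) ^ 2) * (bI n k - bI n i)

/-- Given integer points `(x₁,y₁), …, (x_n,y_n)`, there is `K₀ > 0` such that for every
`K ≥ K₀`, no three of the perturbed points `(x_i + i/K, y_i + i²/K)` with pairwise distinct
indices are collinear. -/
theorem stmt_15 (n : ℕ) (x y : Fin n → ℤ) :
    ∃ K₀ : ℝ, 0 < K₀ ∧ ∀ K : ℝ, K₀ ≤ K →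
      ∀ i j k : Fin n, i ≠ j → i ≠ k → j ≠ k →
        ¬ Collinear ℝ
          ({pert n x y i K, pert n x y j K, pert n x y k K} :
            Set (EuclideanSpace ℝ (Fin 2))) := by
  classical
  set f : Fin n × Fin n × Fin n → ℕ := fun t =>
    (C1 n x y t.1 t.2.1 t.2.2).natAbs + (C2 n t.1 t.2.1 t.2.2).natAbs with hf
  set N : ℕ := Finset.sup Finset.univ f with hN
  refine ⟨(N : ℝ) + 1, by positivity, ?_⟩
  intro K hK i j k hij hik hjk
  have hKb : ((((C1 n x y i j k).natAbs + (C2 n i j k).natAbs : ℕ)) : ℝ) + 1 ≤ K := by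
    have hle : f (i, j, k) ≤ N := Finset.le_sup (Finset.mem_univ (i, j, k))
    have hle' : (C1 n x y i j k).natAbs + (C2 n i j k).natAbs ≤ N := hle
    have : (((C1 n x y i j k).natAbs + (C2 n i j k).natAbs : ℕ) : ℝ) ≤ (N : ℝ) := by
      exact_mod_cast hle'
    linarith
  have hK1 : (1 : ℝ) ≤ K := by
    have : (0:ℝ) ≤ (((C1 n x y i j k).natAbs + (C2 n i j k).natAbs : ℕ) : ℝ) :=
      Nat.cast_nonneg _
    linarith
  have hK0 : (0 : ℝ) < K := by linarith
  have hbne : ∀ p q : Fin n, p ≠ q → bI n p ≠ bI n q := by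
    intro p q hpq
    simp only [bI, ne_eq, add_left_inj, Nat.cast_inj]
    exact fun hpv => hpq (Fin.ext hpv)
  have h2 : C2 n i j k ≠ 0 := by
    have hfac : C2 n i j k = (bI n j - bI n i) * (bI n k - bI n i) * (bI n k - bI n j) := by
      simp only [C2]; ring
    rw [hfac]
    exact mul_ne_zero (mul_ne_zero (sub_ne_zero.2 (hbne j i hij.symm))
      (sub_ne_zero.2 (hbne k i hik.symm))) (sub_ne_zero.2 (hbne k j hjk.symm))
  apply cross_ne_not_collinear
  have e0 : ∀ m : Fin n, pert n x y m K 0 = (x m : ℝ) + ((m : ℕ) + 1) / K := by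
    intro m; simp [pert, mk2]
  have e1 : ∀ m : Fin n, pert n x y m K 1 = (y m : ℝ) + ((m : ℕ) + 1) ^ 2 / K := by
    intro m; simp [pert, mk2]
  rw [e0, e0, e0, e1, e1, e1]
  have hcross :
      ((x j : ℝ) + ((j : ℕ) + 1) / K - ((x i : ℝ) + ((i : ℕ) + 1) / K)) *
          ((y k : ℝ) + ((k : ℕ) + 1) ^ 2 / K - ((y i : ℝ) + ((i : ℕ) + 1) ^ 2 / K)) -
        ((y j : ℝ) + ((j : ℕ) + 1) ^ 2 / K - ((y i : ℝ) + ((i : ℕ) + 1) ^ 2 / K)) *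
          ((x k : ℝ) + ((k : ℕ) + 1) / K - ((x i : ℝ) + ((i : ℕ) + 1) / K)) =
      (((x j - x i) * (y k - y i) - (y j - y i) * (x k - x i) : ℤ) : ℝ)
        + (C1 n x y i j k : ℝ) / K + (C2 n i j k : ℝ) / K ^ 2 := by
    simp only [C1, C2, bI]
    push_cast
    field_simp
    ring
  rw [hcross]
  exact key_arith _ _ _ h2 K hKb
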